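/- Let W_1, ..., W_N be iid real random variables and let W_* = max_i W_i. Let each index i independently pick a uniform slot m_i ∈ {1,...,M} as a measurable nondecreasing function of W_i (so that larger W_i gives smaller slot index, with P(m_i = m) = 1/M for each m). Let S be the event that the minimum chosen slot is unique, and let the scheduled weight be W_* on S and 0 otherwise. Then E[W_* · 1_S] = N · Σ_{m=1}^{M} ((M-m)/M)^{N-1} · E[W · 1{a_m ≤ W < a_{m-1}}], where a_M < a_{M-1} < ... < a_0 are the thresholds defining the slot assignment (slot m corresponds to a_m ≤ W < a_{m-1}) and W is a generic copy of W_1. -/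

import Mathlib

open MeasureTheory
open scoped ENNReal

theorem my_integrable_pi_prod {n : ℕ} (μ : Fin n → Measure ℝ) [∀ i, SigmaFinite (μ i)]
    {f : Fin n → ℝ → ℝ} (hf : ∀ i, Integrable (f i) (μ i)) :
    Integrable (fun x : Fin n → ℝ => ∏ i, f i (x i)) (Measure.pi μ) := by
  induction n with
  | zero =>
      simp only [Finset.univ_eq_empty, Finset.prod_empty]
      rw [integrable_const_iff]
      right
      constructor
      rw [Measure.pi_univ]
      simp
  | succ n n_ih =>
      have h := ((measurePreserving_piFinSuccAbove μ 0).symm)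
      rw [← h.integrable_comp_emb (MeasurableEquiv.measurableEmbedding _)]
      simp_rw [MeasurableEquiv.piFinSuccAbove_symm_apply, Fin.insertNthEquiv,
        Fin.prod_univ_succ, Fin.insertNth_zero]
      simp only [Fin.zero_succAbove, Function.comp_def, Equiv.coe_fn_mk,
        Fin.cons_zero, Fin.cons_succ, cast_eq]
      have : Integrable (fun (x : Fin n → ℝ) ↦ ∏ j, f (Fin.succ j) (x j))
          (Measure.pi fun j => μ (Fin.succ j)) := n_ih _ (fun i ↦ hf _)
      exact Integrable.mul_prod (hf 0) this

theorem my_integral_pi_prod {n : ℕ} (μ : Fin n → Measure ℝ) [∀ i, SigmaFinite (μ i)]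
    (f : Fin n → ℝ → ℝ) :
    ∫ x : Fin n → ℝ, ∏ i, f i (x i) ∂Measure.pi μ = ∏ i, ∫ x, f i x ∂μ i := by
  induction n with
  | zero =>
      simp only [Finset.univ_eq_empty, Finset.prod_empty, integral_const]
      rw [measureReal_def, Measure.pi_univ]
      simp
  | succ n n_ih =>
      calc
        _ = ∫ x : ℝ × (Fin n → ℝ),
            f 0 x.1 * ∏ i : Fin n, f (Fin.succ i) (x.2 i)
              ∂((μ 0).prod (Measure.pi fun j => μ (Fin.succ j))) := by
          rw [← ((measurePreserving_piFinSuccAbove μ 0).symm).integral_comp']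
          simp_rw [MeasurableEquiv.piFinSuccAbove_symm_apply, Fin.insertNthEquiv,
            Fin.prod_univ_succ, Fin.insertNth_zero, Equiv.coe_fn_mk, Fin.cons_succ,
            Fin.zero_succAbove, Fin.cons_zero, cast_eq]
        _ = (∫ x, f 0 x ∂μ 0) * ∏ i : Fin n, ∫ x, f (Fin.succ i) x ∂μ (Fin.succ i) := by
          rw [← n_ih, ← integral_prod_mul]
        _ = ∏ i, ∫ x, f i x ∂μ i := by rw [Fin.prod_univ_succ]

theorem expected_scheduled_weight_identity (N M : ℕ) (hN : 1 ≤ N) (hM : 1 ≤ M)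
    (ν : Measure ℝ) [IsProbabilityMeasure ν]
    (a : ℕ → ℝ)
    (ha : ∀ m ∈ Finset.Icc 1 M, a m < a (m - 1))
    (hquant : ∀ m ∈ Finset.Icc 1 M, ν (Set.Ico (a m) (a (m - 1))) = 1 / M)
    (slot : ℝ → ℕ) (hmeas : Measurable slot)
    (hslot : ∀ m ∈ Finset.Icc 1 M, ∀ x : ℝ,
      slot x = m ↔ x ∈ Set.Ico (a m) (a (m - 1)))
    (hint : Integrable (id : ℝ → ℝ) ν) :
    ∫ ω in {ω : Fin N → ℝ | ∃ i : Fin N, ∀ j : Fin N, j ≠ i → slot (ω i) < slot (ω j)},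
        (⨆ i : Fin N, ω i) ∂(Measure.pi fun _ : Fin N => ν)
      = (N : ℝ) * ∑ m ∈ Finset.Icc 1 M,
          (((M : ℝ) - m) / M) ^ (N - 1) * ∫ x in Set.Ico (a m) (a (m - 1)), x ∂ν := by
  classical
  haveI : Nonempty (Fin N) := ⟨⟨0, hN⟩⟩
  set μ := Measure.pi fun _ : Fin N => ν with hμdef
  set S : Set (Fin N → ℝ) :=
    {ω : Fin N → ℝ | ∃ i : Fin N, ∀ j : Fin N, j ≠ i → slot (ω i) < slot (ω j)} with hSdef
  set I : ℕ → Set ℝ := fun m => Set.Ico (a m) (a (m - 1)) with hIdef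
  set B : ℕ → Set ℝ := fun m => slot ⁻¹' Set.Ioi m with hBdef
  have hImeas : ∀ m, MeasurableSet (I m) := fun m => measurableSet_Ico
  have hBmeas : ∀ m, MeasurableSet (B m) := fun m => hmeas measurableSet_Ioi
  have hmemB : ∀ m x, x ∈ B m ↔ m < slot x := fun m x => Iff.rfl
  -- monotonicity of thresholds
  have amono : ∀ k l : ℕ, k ≤ l → l ≤ M → a l ≤ a k := by
    intro k l hkl hlM
    induction l with
    | zero => simp [Nat.le_zero.mp hkl]
    | succ n ih =>
      rcases Nat.lt_or_ge k (n + 1) with h | h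
      · have h1 : a (n + 1) < a n := by
          have := ha (n + 1) (Finset.mem_Icc.mpr ⟨Nat.succ_le_succ (Nat.zero_le n), hlM⟩)
          simpa using this
        exact le_trans h1.le (ih (Nat.lt_succ_iff.mp h) (le_trans (Nat.le_succ n) hlM))
      · have : k = n + 1 := le_antisymm hkl h
        simp [this]
  have slot_eq : ∀ m ∈ Finset.Icc 1 M, ∀ x ∈ I m, slot x = m := fun m hm x hx =>
    (hslot m hm x).mpr hx
  -- the union of the slot intervals
  set U : Set ℝ := ⋃ m ∈ Finset.Icc 1 M, I m with hUdef
  have hUmeas : MeasurableSet U := by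
    exact Finset.measurableSet_biUnion _ fun m _ => hImeas m
  have Idisj : (↑(Finset.Icc 1 M) : Set ℕ).Pairwise (Function.onFun Disjoint I) := by
    intro m hm m' hm' hne
    rw [Function.onFun, Set.disjoint_left]
    intro x hx hx'
    exact hne ((slot_eq m (by simpa using hm) x hx) ▸ slot_eq m' (by simpa using hm') x hx')
  have hM0 : (M : ℝ≥0∞) ≠ 0 := Nat.cast_ne_zero.mpr (by omega)
  have hνU : ν U = 1 := by
    rw [hUdef, measure_biUnion_finset Idisj fun m _ => hImeas m]
    rw [Finset.sum_congr rfl hquant, Finset.sum_const, Nat.card_Icc]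
    simp only [Nat.add_sub_cancel, nsmul_eq_mul]
    rw [one_div, ENNReal.mul_inv_cancel hM0 (by simp)]
  have hνUc : ν Uᶜ = 0 := by
    rw [measure_compl hUmeas (measure_ne_top ν U), hνU, measure_univ, tsub_self]
  have hmemU : ∀ x ∈ U, ∃ m ∈ Finset.Icc 1 M, x ∈ I m := by
    intro x hx
    rw [hUdef] at hx
    simpa using hx
  -- measure of B m
  have hνB : ∀ m ∈ Finset.Icc 1 M, ν (B m) = (↑(M - m) : ℝ≥0∞) / M := by
    intro m hm
    have hBU : B m ∩ U = ⋃ m' ∈ Finset.Icc (m + 1) M, I m' := by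
      ext x
      simp only [Set.mem_inter_iff, Set.mem_iUnion, exists_prop]
      constructor
      · rintro ⟨hxB, hxU⟩
        obtain ⟨m', hm', hxI⟩ := hmemU x hxU
        have hsx : slot x = m' := slot_eq m' hm' x hxI
        have : m < m' := hsx ▸ hxB
        exact ⟨m', Finset.mem_Icc.mpr ⟨this, (Finset.mem_Icc.mp hm').2⟩, hxI⟩
      · rintro ⟨m', hm', hxI⟩
        rw [Finset.mem_Icc] at hm'
        have hm'' : m' ∈ Finset.Icc 1 M := Finset.mem_Icc.mpr ⟨by omega, hm'.2⟩
        refine ⟨?_, Set.mem_biUnion hm'' hxI⟩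
        show m < slot x
        rw [slot_eq m' hm'' x hxI]
        omega
    rw [← measure_inter_conull hνUc, hBU,
      measure_biUnion_finset (Idisj.mono (by intro x hx; simp at hx ⊢; omega))
        fun m' _ => hImeas m']
    rw [Finset.sum_congr rfl fun m' hm' => hquant m'
      (by rw [Finset.mem_Icc] at hm' ⊢; omega), Finset.sum_const, Nat.card_Icc]
    have hcard : M + 1 - (m + 1) = M - m := by omega
    rw [hcard, nsmul_eq_mul, one_div, div_eq_mul_inv]
  -- the rectangles T i m
  set T : Fin N → ℕ → Set (Fin N → ℝ) :=
    fun i m => Set.univ.pi fun j => if j = i then I m else B m with hTdef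
  have memT : ∀ i m (ω : Fin N → ℝ),
      ω ∈ T i m ↔ ω i ∈ I m ∧ ∀ j, j ≠ i → ω j ∈ B m := by
    intro i m ω
    constructor
    · intro h
      refine ⟨by simpa using h i (Set.mem_univ i), fun j hj => by
        have := h j (Set.mem_univ j); simpa [hj] using this⟩
    · rintro ⟨h1, h2⟩ j _
      by_cases hj : j = i
      · simpa [hj] using h1
      · simpa [hj] using h2 j hj
  have hTmeas : ∀ i m, MeasurableSet (T i m) := by
    intro i m
    refine MeasurableSet.univ_pi fun j => ?_
    by_cases hj : j = i <;> simp [hj, hImeas, hBmeas]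
  have hTsubS : ∀ i, ∀ m ∈ Finset.Icc 1 M, T i m ⊆ S := by
    intro i m hm ω hω
    obtain ⟨h1, h2⟩ := (memT i m ω).mp hω
    refine ⟨i, fun j hj => ?_⟩
    rw [slot_eq m hm _ h1]
    exact h2 j hj
  -- uniqueness
  have Tuniq : ∀ (ω : Fin N → ℝ) i m i' m', m ∈ Finset.Icc 1 M → m' ∈ Finset.Icc 1 M →
      ω ∈ T i m → ω ∈ T i' m' → (i, m) = (i', m') := by
    intro ω i m i' m' hm hm' hT hT'
    obtain ⟨h1, h2⟩ := (memT i m ω).mp hT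
    obtain ⟨h1', h2'⟩ := (memT i' m' ω).mp hT'
    by_cases hii : i = i'
    · subst hii
      have : m = m' := (slot_eq m hm _ h1) ▸ slot_eq m' hm' _ h1'
      rw [this]
    · exfalso
      have ha1 : m < slot (ω i') := h2 i' (fun h => hii h.symm)
      have ha2 : m' < slot (ω i) := h2' i hii
      rw [slot_eq m' hm' _ h1'] at ha1
      rw [slot_eq m hm _ h1] at ha2
      omega
  -- the good set G
  set G : Set (Fin N → ℝ) := Set.univ.pi fun _ => U with hGdef
  have hGmeas : MeasurableSet G := MeasurableSet.univ_pi fun _ => hUmeas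
  have hμGc : μ Gᶜ = 0 := by
    rw [measure_compl hGmeas (measure_ne_top μ G), hGdef, hμdef, Measure.pi_pi]
    simp [hνU]
  -- sup on T i m within G
  have hsupT : ∀ ω ∈ G, ∀ i, ∀ m ∈ Finset.Icc 1 M, ω ∈ T i m → (⨆ j, ω j) = ω i := by
    intro ω hG i m hm hT
    obtain ⟨h1, h2⟩ := (memT i m ω).mp hT
    have hle : ∀ j, ω j ≤ ω i := by
      intro j
      by_cases hj : j = i
      · exact hj ▸ le_refl _
      · have hBj : m < slot (ω j) := h2 j hj
        obtain ⟨m', hm', hxI⟩ := hmemU (ω j) (hG j (Set.mem_univ j))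
        have hsj : slot (ω j) = m' := slot_eq m' hm' _ hxI
        have hmm' : m < m' := hsj ▸ hBj
        have : ω j < a (m' - 1) := hxI.2
        have h3 : a (m' - 1) ≤ a m := by
          refine amono m (m' - 1) (by omega) ?_
          have := (Finset.mem_Icc.mp hm').2
          omega
        have h4 : a m ≤ ω i := h1.1
        linarith
    exact le_antisymm (ciSup_le hle) (le_ciSup (Set.Finite.bddAbove (Set.finite_range ω)) i)
  -- measurability of S
  have hSmeas : MeasurableSet S := by
    have h1 : ∀ i j : Fin N, MeasurableSet {ω : Fin N → ℝ | slot (ω i) < slot (ω j)} := by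
      intro i j
      have heq : {ω : Fin N → ℝ | slot (ω i) < slot (ω j)} =
          ⋃ n : ℕ, ((fun ω : Fin N → ℝ => ω i) ⁻¹' (slot ⁻¹' {n})) ∩
            ((fun ω : Fin N → ℝ => ω j) ⁻¹' (slot ⁻¹' Set.Ioi n)) := by
        ext ω
        simp only [Set.mem_setOf_eq, Set.mem_iUnion, Set.mem_inter_iff, Set.mem_preimage,
          Set.mem_singleton_iff, Set.mem_Ioi]
        exact ⟨fun h => ⟨slot (ω i), rfl, h⟩, fun ⟨n, hn, h⟩ => hn ▸ h⟩
      rw [heq]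
      exact MeasurableSet.iUnion fun n =>
        ((hmeas.comp (measurable_pi_apply i)) (measurableSet_singleton n)).inter
          ((hmeas.comp (measurable_pi_apply j)) measurableSet_Ioi)
    have heqS : S = ⋃ i : Fin N, ⋂ j : Fin N,
        if j = i then Set.univ else {ω : Fin N → ℝ | slot (ω i) < slot (ω j)} := by
      ext ω
      simp only [hSdef, Set.mem_setOf_eq, Set.mem_iUnion, Set.mem_iInter]
      refine exists_congr fun i => ?_
      constructor
      · intro h j
        by_cases hj : j = i
        · simp [hj]
        · simpa [hj] using h j hj
      · intro h j hj
        have := h j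
        simpa [hj] using this
    rw [heqS]
    exact MeasurableSet.iUnion fun i => MeasurableSet.iInter fun j => by
      by_cases hj : j = i <;> simp [hj, h1]
  -- the index finset
  set P : Finset (Fin N × ℕ) := Finset.univ ×ˢ Finset.Icc 1 M with hPdef
  -- a.e. pointwise identity
  have key : ∀ ω ∈ G, S.indicator (fun ω : Fin N → ℝ => ⨆ i, ω i) ω =
      ∑ p ∈ P, (T p.1 p.2).indicator (fun ω : Fin N → ℝ => ω p.1) ω := by
    intro ω hG
    by_cases hωS : ω ∈ S
    · have hωS' := hωS
      obtain ⟨i, hi⟩ := hωS'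
      obtain ⟨m, hm, hmI⟩ := hmemU (ω i) (hG i (Set.mem_univ i))
      have hsi : slot (ω i) = m := slot_eq m hm _ hmI
      have hT : ω ∈ T i m := (memT i m ω).mpr ⟨hmI, fun j hj => by
        show m < slot (ω j); exact hsi ▸ hi j hj⟩
      rw [Set.indicator_of_mem hωS, hsupT ω hG i m hm hT]
      rw [Finset.sum_eq_single (i, m)]
      · rw [Set.indicator_of_mem hT]
      · intro p hp hne
        rw [hPdef, Finset.mem_product] at hp
        refine Set.indicator_of_notMem (fun hmem => hne ?_) _
        exact (Tuniq ω p.1 p.2 i m hp.2 hm hmem hT)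
      · intro habs
        exact absurd (Finset.mem_product.mpr ⟨Finset.mem_univ i, hm⟩) habs
    · rw [Set.indicator_of_notMem hωS]
      refine (Finset.sum_eq_zero fun p hp => ?_).symm
      rw [hPdef, Finset.mem_product] at hp
      exact Set.indicator_of_notMem (fun hmem => hωS (hTsubS p.1 p.2 hp.2 hmem)) _
  -- rewriting each indicator as a product function
  have hprodfun : ∀ i, ∀ m, (T i m).indicator (fun ω : Fin N → ℝ => ω i) =
      fun ω : Fin N → ℝ => ∏ j, (if j = i then (I m).indicator id
        else (B m).indicator (fun _ => (1 : ℝ))) (ω j) := by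
    intro i m
    funext ω
    by_cases hω : ω ∈ T i m
    · obtain ⟨h1, h2⟩ := (memT i m ω).mp hω
      rw [Set.indicator_of_mem hω]
      rw [Finset.prod_eq_single i]
      · simp [Set.indicator_of_mem h1]
      · intro j _ hj
        simp only [if_neg hj]
        exact Set.indicator_of_mem (h2 j hj) _
      · intro habs
        exact absurd (Finset.mem_univ i) habs
    · rw [Set.indicator_of_notMem hω]
      have : ∃ j, ω j ∉ (if j = i then I m else B m) := by
        by_contra hc
        push_neg at hc
        exact hω fun j _ => hc j
      obtain ⟨j, hj⟩ := this
      refine (Finset.prod_eq_zero (Finset.mem_univ j) ?_).symm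
      by_cases hji : j = i
      · rw [hji] at hj ⊢
        simp only [if_pos rfl] at hj ⊢
        exact Set.indicator_of_notMem hj _
      · simp only [if_neg hji] at hj ⊢
        exact Set.indicator_of_notMem hj _
  -- integrability of each piece
  have hintp : ∀ p ∈ P, Integrable ((T p.1 p.2).indicator
      (fun ω : Fin N → ℝ => ω p.1)) μ := by
    rintro ⟨i, m⟩ _
    rw [hprodfun i m, hμdef]
    refine my_integrable_pi_prod _ fun j => ?_
    by_cases hj : j = i
    · simp only [if_pos hj]
      exact hint.indicator (hImeas m)
    · simp only [if_neg hj]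
      exact (integrable_const (1 : ℝ)).indicator (hBmeas m)
  -- value of each piece
  have hval : ∀ i, ∀ m ∈ Finset.Icc 1 M,
      ∫ ω, (T i m).indicator (fun ω : Fin N → ℝ => ω i) ω ∂μ =
        (∫ x in I m, x ∂ν) * (((M : ℝ) - m) / M) ^ (N - 1) := by
    intro i m hm
    rw [hprodfun i m, hμdef, my_integral_pi_prod]
    have hcongr : ∀ j : Fin N, (∫ x, (if j = i then (I m).indicator id
        else (B m).indicator (fun _ => (1 : ℝ))) x ∂ν) =
        if j = i then (∫ x in I m, x ∂ν) else ((M : ℝ) - m) / M := by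
      intro j
      by_cases hj : j = i
      · simp only [if_pos hj]
        rw [integral_indicator (hImeas m)]
        rfl
      · simp only [if_neg hj]
        rw [integral_indicator_const (1 : ℝ) (hBmeas m), measureReal_def, hνB m hm]
        rw [Finset.mem_Icc] at hm
        rw [smul_eq_mul, mul_one, ENNReal.toReal_div, ENNReal.toReal_natCast, ENNReal.toReal_natCast, Nat.cast_sub hm.2]
    rw [Finset.prod_congr rfl fun j _ => hcongr j]
    rw [← Finset.mul_prod_erase Finset.univ _ (Finset.mem_univ i), if_pos rfl]
    rw [Finset.prod_congr rfl fun j hj => if_neg (Finset.ne_of_mem_erase hj),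
      Finset.prod_const, Finset.card_erase_of_mem (Finset.mem_univ i), Finset.card_univ,
      Fintype.card_fin]
  -- put it together
  have hae : (S.indicator fun ω : Fin N → ℝ => ⨆ i, ω i) =ᵐ[μ]
      fun ω => ∑ p ∈ P, (T p.1 p.2).indicator (fun ω : Fin N → ℝ => ω p.1) ω := by
    have hG : ∀ᵐ ω ∂μ, ω ∈ G := by
      rw [ae_iff]
      exact hμGc
    filter_upwards [hG] with ω hω using key ω hω
  calc
    ∫ ω in S, (⨆ i, ω i) ∂μ
        = ∫ ω, S.indicator (fun ω : Fin N → ℝ => ⨆ i, ω i) ω ∂μ := by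
          rw [integral_indicator hSmeas]
    _ = ∫ ω, (∑ p ∈ P, (T p.1 p.2).indicator (fun ω : Fin N → ℝ => ω p.1) ω) ∂μ :=
          integral_congr_ae hae
    _ = ∑ p ∈ P, ∫ ω, (T p.1 p.2).indicator (fun ω : Fin N → ℝ => ω p.1) ω ∂μ :=
          integral_finset_sum P hintp
    _ = ∑ p ∈ P, (∫ x in I p.2, x ∂ν) * (((M : ℝ) - p.2) / M) ^ (N - 1) := by
          refine Finset.sum_congr rfl fun p hp => ?_
          rw [hPdef, Finset.mem_product] at hp
          exact hval p.1 p.2 hp.2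
    _ = (N : ℝ) * ∑ m ∈ Finset.Icc 1 M,
          (((M : ℝ) - m) / M) ^ (N - 1) * ∫ x in Set.Ico (a m) (a (m - 1)), x ∂ν := by
          have hsp : ∑ p ∈ P, (∫ x in I p.2, x ∂ν) * (((M : ℝ) - p.2) / M) ^ (N - 1)
              = ∑ _x : Fin N, ∑ m ∈ Finset.Icc 1 M,
                  (∫ x in I m, x ∂ν) * (((M : ℝ) - m) / M) ^ (N - 1) := by
            rw [hPdef, Finset.sum_product]
          rw [hsp, Finset.sum_const, Finset.card_univ, Fintype.card_fin, nsmul_eq_mul]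
          congr 1
          exact Finset.sum_congr rfl fun m _ => mul_comm _ _
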